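/- Let φ be a probability density on ℝ^d satisfying (H_S) and satisfying (H_Lip) on [−M',M']^d for every M' > 0, and normalized so that ‖φ‖₂ = 1. Then there exists a constant c > 0 such that for all a, b ∈ ℝ^d: |⟨φ − φ_a, φ_{a+b} − φ_a⟩| ≤ ‖φ − φ_a‖₂ · ‖φ_{a+b} − φ_a‖₂ · (1 − c ‖φ − φ_{a+b}‖₂²) (a quantitative refinement of the Cauchy–Schwarz inequality in the location model). -/

import Mathlib

open MeasureTheory ENNReal

set_option maxHeartbeats 1000000

noncomputable section

/-- `ℝ^d` with the Euclidean norm. -/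
abbrev Eu (d : ℕ) := EuclideanSpace ℝ (Fin d)

/-- `φ` is a probability density on `ℝ^d`. -/
def IsDensity {d : ℕ} (φ : Eu d → ℝ) : Prop :=
  Measurable φ ∧ (∀ x, 0 ≤ φ x) ∧ ∫ x, φ x = 1

/-- The two-component contamination mixture density `f_{λ,μ} = (1-λ)φ + λφ(·-μ)`. -/
def mix {d : ℕ} (φ : Eu d → ℝ) (l : ℝ) (μ : Eu d) : Eu d → ℝ :=
  fun x => (1 - l) * φ x + l * φ (x - μ)

/-- Assumption (H_S): `φ` is `C³` and belongs to `L²(ℝ^d)`. -/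
def HS {d : ℕ} (φ : Eu d → ℝ) : Prop :=
  ContDiff ℝ 3 φ ∧ MemLp φ 2 volume

/-- Assumption (H_Lip) on `[-M,M]^d`: there is `g ∈ L²` with
`|φ(x) - φ(x-μ)| ≤ ‖μ‖ g(x)` for all `x` and all `μ ∈ [-M,M]^d`, and
`∫ g²/φ < ∞`. -/
def HLipOn {d : ℕ} (φ : Eu d → ℝ) (M : ℝ) : Prop :=
  ∃ g : Eu d → ℝ, MemLp g 2 volume ∧
    (∀ (x μ : Eu d), (∀ j, |μ j| ≤ M) → |φ x - φ (x - μ)| ≤ ‖μ‖ * g x) ∧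
    Integrable (fun x => (g x) ^ 2 / φ x)


set_option maxHeartbeats 1000000 in
lemma scalar_key (Q s t q P m : ℝ) (hQ : 0 ≤ Q) (hs : 0 ≤ s) (ht : 0 ≤ t) (hq : 0 ≤ q)
    (hsum : Q + s + t + q = 1) (hPst : P^2 ≤ s*t) (hPQq : P^2 ≤ Q*q)
    (hm0 : 0 ≤ m) (hm2 : m^2 = (Q+s)*(Q+t)) :
    |Q - P| ≤ m * (1 - (s + t + 2*P)/16) := by
  set R : ℝ := s + t + 2*P with hR
  clear_value R
  set σ : ℝ := Real.sqrt (s*t) with hσ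
  clear_value σ
  have hσ0 : 0 ≤ σ := by rw [hσ]; exact Real.sqrt_nonneg _
  have hσ2 : σ^2 = s*t := by rw [hσ]; exact Real.sq_sqrt (mul_nonneg hs ht)
  have hPσ : |P| ≤ σ := by
    have h1 : P^2 ≤ σ^2 := by rw [hσ2]; exact hPst
    exact abs_le.mpr (abs_le_of_sq_le_sq' h1 hσ0)
  have hP1 : -σ ≤ P := (abs_le.mp hPσ).1
  have hP2 : P ≤ σ := (abs_le.mp hPσ).2
  have hstσ : 2*σ ≤ s + t := by
    have h2 : s*t ≤ ((s+t)/2)^2 := by nlinarith [sq_nonneg (s-t)]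
    have h3 : σ ≤ (s+t)/2 := by
      rw [hσ]
      calc Real.sqrt (s*t) ≤ Real.sqrt (((s+t)/2)^2) := Real.sqrt_le_sqrt h2
      _ = (s+t)/2 := Real.sqrt_sq (by linarith)
    linarith
  have hR0 : 0 ≤ R := by rw [hR]; linarith
  have hmQσ : Q + σ ≤ m := by
    have h1 : (Q+σ)^2 ≤ m^2 := by
      rw [hm2]
      linarith [mul_nonneg hQ (by linarith : (0:ℝ) ≤ s + t - 2*σ), hσ2]
    exact (abs_le_of_sq_le_sq' h1 hm0).2
  have hσm : σ ≤ m := by linarith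
  have hm1 : m ≤ 1 := by
    have h1 : m^2 ≤ 1^2 := by
      rw [hm2]
      have := mul_le_mul (a := Q+s) (b := (1:ℝ)) (c := Q+t) (d := (1:ℝ))
        (by linarith) (by linarith) (by linarith) zero_le_one
      linarith
    exact (abs_le_of_sq_le_sq' h1 zero_le_one).2
  have hQ1R : Q*(1-R) = Q^2 + Q*q - 2*Q*P := by
    rw [hR]; linear_combination (-Q)*hsum
  have hkey : (Q-P)^2 ≤ Q*(1-R) := by rw [hQ1R]; nlinarith [hPQq]
  have hR1 : R ≤ 1 := by
    rcases eq_or_lt_of_le hQ with h0 | h0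
    · have hP0 : P = 0 := by nlinarith [sq_nonneg P]
      rw [hR, hP0]; linarith
    · nlinarith [sq_nonneg (Q-P)]
  by_cases hc : 4*Q ≤ m^2
  · -- Case I
    set τ : ℝ := Real.sqrt Q with hτ
    clear_value τ
    have hτ0 : 0 ≤ τ := by rw [hτ]; exact Real.sqrt_nonneg _
    have hτ2 : τ^2 = Q := by rw [hτ]; exact Real.sq_sqrt hQ
    have hτm : 2*τ ≤ m := by
      have h1 : (2*τ)^2 ≤ m^2 := by rw [mul_pow, hτ2]; linarith
      exact (abs_le_of_sq_le_sq' h1 hm0).2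
    have h1R : 0 ≤ 1 - R := by linarith
    have e1 : |Q-P| ≤ Real.sqrt (Q*(1-R)) := by
      have h := Real.sqrt_le_sqrt hkey
      rwa [Real.sqrt_sq_eq_abs] at h
    have e2 : Real.sqrt (Q*(1-R)) = τ * Real.sqrt (1-R) := by
      rw [hτ]; exact Real.sqrt_mul hQ _
    have e3 : Real.sqrt (1-R) ≤ 1 - R/2 := by
      have h2 : 1-R ≤ (1-R/2)^2 := by nlinarith [sq_nonneg R]
      calc Real.sqrt (1-R) ≤ Real.sqrt ((1-R/2)^2) := Real.sqrt_le_sqrt h2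
      _ = 1-R/2 := Real.sqrt_sq (by linarith)
    have e4 : τ * Real.sqrt (1-R) ≤ τ * (1-R/2) :=
      mul_le_mul_of_nonneg_left e3 hτ0
    have e5 : τ * (1-R/2) ≤ (m/2) * (1-R/2) :=
      mul_le_mul_of_nonneg_right (by linarith) (by linarith)
    have e6 : (m/2) * (1-R/2) ≤ m * (1 - R/16) := by
      have := mul_nonneg hm0 hR0
      nlinarith
    calc |Q-P| ≤ Real.sqrt (Q*(1-R)) := e1
    _ = τ * Real.sqrt (1-R) := e2
    _ ≤ τ * (1-R/2) := e4
    _ ≤ (m/2) * (1-R/2) := e5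
    _ ≤ m * (1 - R/16) := e6
  · -- Case II
    push_neg at hc
    have hQpos : 0 < Q := by linarith [sq_nonneg m]
    set δ : ℝ := m - Q - σ with hδ
    clear_value δ
    have hδ0 : 0 ≤ δ := by rw [hδ]; linarith
    have hid : 2*m*δ = Q*(s+t-2*σ) + δ^2 := by
      rw [hδ]; linear_combination hm2 - hσ2
    have hL2 : Q*(s+t-2*σ) ≤ 2*m*δ := by linarith [sq_nonneg δ]
    rcases le_or_gt P Q with hPQ | hPQ
    · -- P ≤ Q
      have habs : |Q-P| = Q - P := abs_of_nonneg (by linarith)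
      have h8 : m*(s+t-2*σ) ≤ 8*δ := by
        have hint1 : m*(Q*(s+t-2*σ)) ≤ m*(2*m*δ) := mul_le_mul_of_nonneg_left hL2 hm0
        have hint2 : (0:ℝ) ≤ δ*(4*Q - m^2) := mul_nonneg hδ0 (by linarith)
        have h1 : Q*(m*(s+t-2*σ)) ≤ Q*(8*δ) := by nlinarith [hint1, hint2]
        exact le_of_mul_le_mul_left h1 hQpos
      have hNδ : δ ≤ m - Q + P := by rw [hδ]; linarith
      have hL1 : (m - Q + P) - m*R/4 + (m/4)*(s+t-2*σ) = δ + (P+σ)*(1-m/2) := by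
        rw [hδ, hR]; ring
      have hfin : m*R/16 ≤ m - Q + P := by
        have t1 : (0:ℝ) ≤ (P + σ)*(1 - m/2) := mul_nonneg (by linarith) (by linarith)
        have t2 : (0:ℝ) ≤ m*R := mul_nonneg hm0 hR0
        linarith [hL1, h8, hNδ, t1, t2]
      rw [habs]; linarith
    · -- P > Q
      have habs : |Q-P| = P - Q := by rw [abs_sub_comm]; exact abs_of_nonneg (by linarith)
      have hQst : Q*(s+t) ≤ 2*Q*m + 2*m*δ := by
        have := mul_nonneg hQ (by linarith : (0:ℝ) ≤ m - σ)
        nlinarith [hL2]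
      have hmm : m^2 ≤ 4*Q := le_of_lt hc
      have hfin : m*R ≤ 16*(m + Q - P) := by
        have s1 : m*(Q*(s+t)) ≤ m*(2*Q*m + 2*m*δ) := mul_le_mul_of_nonneg_left hQst hm0
        have s2 : Q*(m^2) ≤ Q*(4*Q) := mul_le_mul_of_nonneg_left hmm hQ
        have s3 : δ*(m^2) ≤ δ*(4*Q) := mul_le_mul_of_nonneg_left hmm hδ0
        have s4 : m*P ≤ m*m := mul_le_mul_of_nonneg_left (by linarith) hm0
        have s4' : Q*(m*P) ≤ Q*(m*m) := mul_le_mul_of_nonneg_left s4 hQ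
        have s5 : Q*(2*Q+δ) ≤ Q*(m+Q-P) := mul_le_mul_of_nonneg_left (by linarith) hQ
        have h1 : Q*(m*R) ≤ Q*(16*(m + Q - P)) := by
          rw [hR]
          nlinarith [s1, s2, s3, s4', s5, sq_nonneg Q, mul_nonneg hQ hδ0]
        exact le_of_mul_le_mul_left h1 hQpos
      rw [habs]; linarith

namespace CSRefine

variable {d : ℕ}

lemma meas_tr (φ : Eu d → ℝ) (hm : Measurable φ) (μ : Eu d) :
    Measurable (fun x : Eu d => φ (x - μ)) :=
  hm.comp (measurable_id.sub measurable_const)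

lemma memL2_tr (φ : Eu d → ℝ) (hL2 : MemLp φ 2 (volume : Measure (Eu d))) (μ : Eu d) :
    MemLp (fun x : Eu d => φ (x - μ)) 2 volume :=
  hL2.comp_measurePreserving (measurePreserving_sub_right volume μ)

lemma int_mul (φ : Eu d → ℝ) (hm : Measurable φ) (hL2 : MemLp φ 2 (volume : Measure (Eu d)))
    (μ ν : Eu d) : Integrable (fun x => φ (x - μ) * φ (x - ν)) := by
  have h1 := (memL2_tr φ hL2 μ).integrable_sq
  have h2 := (memL2_tr φ hL2 ν).integrable_sq
  refine Integrable.mono' ((h1.add h2).div_const 2)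
    (((meas_tr φ hm μ).mul (meas_tr φ hm ν)).aestronglyMeasurable)
    (Filter.Eventually.of_forall fun x => ?_)
  have : |φ (x - μ) * φ (x - ν)| ≤ ((φ (x - μ))^2 + (φ (x - ν))^2)/2 := by
    rw [abs_mul]
    nlinarith [sq_nonneg (|φ (x - μ)| - |φ (x - ν)|), sq_abs (φ (x - μ)), sq_abs (φ (x - ν)),
      abs_nonneg (φ (x - μ)), abs_nonneg (φ (x - ν))]
  simpa [abs_mul] using this

lemma tr_eq (φ : Eu d → ℝ) (μ ν : Eu d) :
    ∫ x, φ (x - μ) * φ (x - ν) = ∫ x, φ x * φ (x - (ν - μ)) := by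
  have h := integral_sub_right_eq_self (μ := (volume : Measure (Eu d)))
    (fun x => φ x * φ (x - (ν - μ))) μ
  rw [← h]
  refine integral_congr_ae (Filter.Eventually.of_forall fun x => ?_)
  have hx : x - μ - (ν - μ) = x - ν := by abel
  simp only [hx]

lemma H_neg (φ : Eu d → ℝ) (μ : Eu d) :
    ∫ x, φ x * φ (x - (-μ)) = ∫ x, φ x * φ (x - μ) := by
  have h1 := tr_eq φ μ 0
  simp only [sub_zero, zero_sub] at h1
  rw [← h1]
  exact integral_congr_ae (Filter.Eventually.of_forall fun x => mul_comm _ _)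

lemma gram (φ : Eu d → ℝ) (hm : Measurable φ) (hL2 : MemLp φ 2 (volume : Measure (Eu d)))
    (n : ℕ) (c : Fin n → ℝ) (p : Fin n → Eu d) :
    0 ≤ ∑ i, ∑ j, c i * c j * ∫ x, φ x * φ (x - (p j - p i)) := by
  have intij : ∀ i j : Fin n,
      Integrable (fun x => (c i * φ (x - p i)) * (c j * φ (x - p j))) := by
    intro i j
    have h := (int_mul φ hm hL2 (p i) (p j)).const_mul (c i * c j)
    refine h.congr (Filter.Eventually.of_forall fun x => ?_)
    ring
  have e2 : ∀ i j : Fin n, ∫ x, (c i * φ (x - p i)) * (c j * φ (x - p j))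
      = c i * c j * ∫ x, φ x * φ (x - (p j - p i)) := by
    intro i j
    calc ∫ x, (c i * φ (x - p i)) * (c j * φ (x - p j))
        = ∫ x, (c i * c j) * (φ (x - p i) * φ (x - p j)) := by
          refine integral_congr_ae (Filter.Eventually.of_forall fun x => ?_); ring
      _ = (c i * c j) * ∫ x, φ (x - p i) * φ (x - p j) := integral_const_mul _ _
      _ = c i * c j * ∫ x, φ x * φ (x - (p j - p i)) := by rw [tr_eq]
  have e1 : ∫ x, (∑ i, c i * φ (x - p i))^2
      = ∑ i, ∑ j, ∫ x, (c i * φ (x - p i)) * (c j * φ (x - p j)) := by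
    have e0 : ∀ x : Eu d, (∑ i, c i * φ (x - p i))^2
        = ∑ i, ∑ j, (c i * φ (x - p i)) * (c j * φ (x - p j)) := by
      intro x; rw [sq, Finset.sum_mul_sum]
    rw [integral_congr_ae (Filter.Eventually.of_forall e0),
      integral_finset_sum _ (fun i _ => integrable_finset_sum _ (fun j _ => intij i j))]
    exact Finset.sum_congr rfl fun i _ => integral_finset_sum _ (fun j _ => intij i j)
  have pos : 0 ≤ ∫ x, (∑ i, c i * φ (x - p i))^2 :=
    integral_nonneg fun x => sq_nonneg _
  rw [e1] at pos
  calc (0:ℝ) ≤ ∑ i, ∑ j, ∫ x, (c i * φ (x - p i)) * (c j * φ (x - p j)) := pos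
    _ = ∑ i, ∑ j, c i * c j * ∫ x, φ x * φ (x - (p j - p i)) := by
        exact Finset.sum_congr rfl fun i _ => Finset.sum_congr rfl fun j _ => e2 i j

lemma gram4 (φ : Eu d → ℝ) (hm : Measurable φ) (hL2 : MemLp φ 2 (volume : Measure (Eu d)))
    (c1 c2 c3 c4 : ℝ) (p1 p2 p3 p4 : Eu d) :
    0 ≤ (c1^2+c2^2+c3^2+c4^2) * (∫ x, φ x * φ x)
      + 2*c1*c2 * (∫ x, φ x * φ (x - (p2 - p1)))
      + 2*c1*c3 * (∫ x, φ x * φ (x - (p3 - p1)))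
      + 2*c1*c4 * (∫ x, φ x * φ (x - (p4 - p1)))
      + 2*c2*c3 * (∫ x, φ x * φ (x - (p3 - p2)))
      + 2*c2*c4 * (∫ x, φ x * φ (x - (p4 - p2)))
      + 2*c3*c4 * (∫ x, φ x * φ (x - (p4 - p3))) := by
  have g := gram φ hm hL2 4 ![c1,c2,c3,c4] ![p1,p2,p3,p4]
  simp only [Fin.sum_univ_four, Matrix.cons_val_zero, Matrix.cons_val_one, Matrix.head_cons,
    Matrix.cons_val_two, Matrix.tail_cons, Matrix.cons_val_three] at g
  rw [show p1 - p2 = -(p2 - p1) from by abel, H_neg φ (p2 - p1),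
      show p1 - p3 = -(p3 - p1) from by abel, H_neg φ (p3 - p1),
      show p1 - p4 = -(p4 - p1) from by abel, H_neg φ (p4 - p1),
      show p2 - p3 = -(p3 - p2) from by abel, H_neg φ (p3 - p2),
      show p2 - p4 = -(p4 - p2) from by abel, H_neg φ (p4 - p2),
      show p3 - p4 = -(p4 - p3) from by abel, H_neg φ (p4 - p3)] at g
  simp only [sub_self, sub_zero] at g
  linarith [g]

lemma exp_prod (φ : Eu d → ℝ) (hm : Measurable φ) (hL2 : MemLp φ 2 (volume : Measure (Eu d)))
    (w1 z1 w2 z2 : Eu d) :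
    ∫ x, (φ (x - w1) - φ (x - z1)) * (φ (x - w2) - φ (x - z2))
      = (∫ x, φ x * φ (x - (w2 - w1))) - (∫ x, φ x * φ (x - (z2 - w1)))
        - (∫ x, φ x * φ (x - (w2 - z1))) + (∫ x, φ x * φ (x - (z2 - z1))) := by
  have i11 := int_mul φ hm hL2 w1 w2
  have i12 := int_mul φ hm hL2 w1 z2
  have i21 := int_mul φ hm hL2 z1 w2
  have i22 := int_mul φ hm hL2 z1 z2
  have e : (fun x => (φ (x - w1) - φ (x - z1)) * (φ (x - w2) - φ (x - z2)))
      = fun x => (φ (x-w1) * φ (x-w2) - φ (x-w1) * φ (x-z2))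
               - (φ (x-z1) * φ (x-w2) - φ (x-z1) * φ (x-z2)) := by
    funext x; ring
  have h1 := integral_sub (μ := (volume : Measure (Eu d)))
    (f := fun x => φ (x-w1) * φ (x-w2) - φ (x-w1) * φ (x-z2))
    (g := fun x => φ (x-z1) * φ (x-w2) - φ (x-z1) * φ (x-z2)) (i11.sub i12) (i21.sub i22)
  have h2 := integral_sub (μ := (volume : Measure (Eu d)))
    (f := fun x => φ (x-w1) * φ (x-w2)) (g := fun x => φ (x-w1) * φ (x-z2)) i11 i12
  have h3 := integral_sub (μ := (volume : Measure (Eu d)))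
    (f := fun x => φ (x-z1) * φ (x-w2)) (g := fun x => φ (x-z1) * φ (x-z2)) i21 i22
  rw [e, h1, h2, h3,
    tr_eq φ w1 w2, tr_eq φ w1 z2, tr_eq φ z1 w2, tr_eq φ z1 z2]
  ring

end CSRefine


open CSRefine in
/-- Refinement of the Cauchy–Schwarz inequality in the location model:
`|⟨φ - φ_a, φ_{a+b} - φ_a⟩| ≤ ‖φ - φ_a‖₂ ‖φ_{a+b} - φ_a‖₂ (1 - c‖φ - φ_{a+b}‖₂²)`. -/
theorem cauchy_schwarz_refinement (d : ℕ) (hd : 1 ≤ d)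
    (φ : Eu d → ℝ) (hden : IsDensity φ) (hHS : HS φ)
    (hHL : ∀ M' > (0 : ℝ), HLipOn φ M')
    (hnorm : ∫ x, (φ x) ^ 2 = 1) :
    ∃ c : ℝ, 0 < c ∧
      ∀ a b : Eu d,
        |∫ x, (φ x - φ (x - a)) * (φ (x - (a + b)) - φ (x - a))| ≤
          Real.sqrt (∫ x, (φ x - φ (x - a)) ^ 2) *
            Real.sqrt (∫ x, (φ (x - (a + b)) - φ (x - a)) ^ 2) *
            (1 - c * ∫ x, (φ x - φ (x - (a + b))) ^ 2) := by
  obtain ⟨hφm, hφnn, hφint⟩ := hden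
  have hL2 : MemLp φ 2 (volume : Measure (Eu d)) := hHS.2
  have hone : ∫ x, φ x * φ x = 1 := by
    have e : (fun x => φ x * φ x) = fun x => (φ x)^2 := by funext x; ring
    rw [e]; exact hnorm
  refine ⟨1/64, by norm_num, ?_⟩
  intro a b
  -- half points
  set u : Eu d := (2⁻¹ : ℝ) • (a + b) with hu
  set v : Eu d := (2⁻¹ : ℝ) • (a - b) with hv
  have huu : u + u = a + b := by rw [hu]; module
  have hvv : v + v = a - b := by rw [hv]; module
  have huv1 : u + v = a := by rw [hu, hv]; module
  have huv2 : u - v = b := by rw [hu, hv]; module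
  -- the two master certificates
  have certA : ∀ c1 c2 c3 c4 : ℝ, 0 ≤ (c1^2+c2^2+c3^2+c4^2) * 1
      + 2*c1*c2 * (∫ x, φ x * φ (x - (a+b)))
      + 2*c1*c3 * (∫ x, φ x * φ (x - b))
      + 2*c1*c4 * (∫ x, φ x * φ (x - a))
      + 2*c2*c3 * (∫ x, φ x * φ (x - a))
      + 2*c2*c4 * (∫ x, φ x * φ (x - b))
      + 2*c3*c4 * (∫ x, φ x * φ (x - (a-b))) := by
    intro c1 c2 c3 c4
    have g := gram4 φ hφm hL2 c1 c2 c3 c4 (-u) u (-v) v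
    rw [show u - -u = a + b from by rw [← huu]; abel,
        show -v - -u = b from by rw [← huv2]; abel,
        show v - -u = a from by rw [← huv1]; abel,
        show -v - u = -a from by rw [← huv1]; abel,
        show v - u = -b from by rw [← huv2]; abel,
        show v - -v = a - b from by rw [← hvv]; abel,
        H_neg φ a, H_neg φ b, hone] at g
    exact g
  have certB : ∀ c1 c2 c3 c4 : ℝ, 0 ≤ (c1^2+c2^2+c3^2+c4^2) * 1
      + 2*c1*c2 * (∫ x, φ x * φ (x - (a-b)))
      + 2*c1*c3 * (∫ x, φ x * φ (x - b))
      + 2*c1*c4 * (∫ x, φ x * φ (x - a))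
      + 2*c2*c3 * (∫ x, φ x * φ (x - a))
      + 2*c2*c4 * (∫ x, φ x * φ (x - b))
      + 2*c3*c4 * (∫ x, φ x * φ (x - (a+b))) := by
    intro c1 c2 c3 c4
    have g := gram4 φ hφm hL2 c1 c2 c3 c4 v (-v) u (-u)
    rw [show -v - v = -(a - b) from by rw [← hvv]; abel,
        show u - v = b from huv2,
        show -u - v = -a from by rw [← huv1]; abel,
        show u - -v = a from by rw [← huv1]; abel,
        show -u - -v = -b from by rw [← huv2]; abel,
        show -u - u = -(a+b) from by rw [← huu]; abel,
        H_neg φ (a-b), H_neg φ a, H_neg φ b, H_neg φ (a+b), hone] at g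
    exact g
  -- expand the four integrals in the goal
  have esq1 : ∫ x, (φ x - φ (x - a))^2 = 2 - 2*(∫ x, φ x * φ (x - a)) := by
    have h := exp_prod φ hφm hL2 0 a 0 a
    simp only [sub_zero, zero_sub, sub_self] at h
    rw [H_neg φ a, hone] at h
    have e : (fun x => (φ x - φ (x - a))^2) = fun x => (φ x - φ (x - a)) * (φ x - φ (x - a)) := by
      funext x; ring
    rw [e, h]; ring
  have esq3 : ∫ x, (φ x - φ (x - (a+b)))^2 = 2 - 2*(∫ x, φ x * φ (x - (a+b))) := by
    have h := exp_prod φ hφm hL2 0 (a+b) 0 (a+b)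
    simp only [sub_zero, zero_sub, sub_self] at h
    rw [H_neg φ (a+b), hone] at h
    have e : (fun x => (φ x - φ (x - (a+b)))^2)
        = fun x => (φ x - φ (x - (a+b))) * (φ x - φ (x - (a+b))) := by
      funext x; ring
    rw [e, h]; ring
  have esq2 : ∫ x, (φ (x - (a+b)) - φ (x - a))^2 = 2 - 2*(∫ x, φ x * φ (x - b)) := by
    have h := exp_prod φ hφm hL2 (a+b) a (a+b) a
    rw [show a - (a+b) = -b from by abel, show a + b - a = b from by abel] at h
    simp only [sub_self, sub_zero] at h
    rw [H_neg φ b, hone] at h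
    have e : (fun x => (φ (x - (a+b)) - φ (x - a))^2)
        = fun x => (φ (x - (a+b)) - φ (x - a)) * (φ (x - (a+b)) - φ (x - a)) := by
      funext x; ring
    rw [e, h]; ring
  have ecross : ∫ x, (φ x - φ (x - a)) * (φ (x - (a+b)) - φ (x - a))
      = (∫ x, φ x * φ (x - (a+b))) - (∫ x, φ x * φ (x - a)) - (∫ x, φ x * φ (x - b)) + 1 := by
    have h := exp_prod φ hφm hL2 0 a (a+b) a
    rw [show a + b - a = b from by abel] at h
    simp only [sub_zero, sub_self] at h
    rw [hone] at h
    exact h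
  rw [ecross, esq1, esq2, esq3]
  -- abstract the four inner products
  obtain ⟨Ia, hIa⟩ : ∃ r : ℝ, (∫ x, φ x * φ (x - a)) = r := ⟨_, rfl⟩
  obtain ⟨Ib, hIb⟩ : ∃ r : ℝ, (∫ x, φ x * φ (x - b)) = r := ⟨_, rfl⟩
  obtain ⟨Iab, hIab⟩ : ∃ r : ℝ, (∫ x, φ x * φ (x - (a+b))) = r := ⟨_, rfl⟩
  obtain ⟨Iamb, hIamb⟩ : ∃ r : ℝ, (∫ x, φ x * φ (x - (a-b))) = r := ⟨_, rfl⟩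
  rw [hIa, hIb, hIab]
  simp only [hIa, hIb, hIab, hIamb] at certA certB
  -- scalar data
  have hQ : (0:ℝ) ≤ (4 + 2*Iamb + 2*Iab - 4*Ia - 4*Ib)/16 := by
    have := certB 1 1 (-1) (-1); linarith [this]
  have hs : (0:ℝ) ≤ (4 - 2*Iab - 2*Iamb + 4*Ib - 4*Ia)/16 := by
    have := certA 1 (-1) 1 (-1); linarith [this]
  have ht : (0:ℝ) ≤ (4 - 2*Iab - 2*Iamb + 4*Ia - 4*Ib)/16 := by
    have := certA 1 (-1) (-1) 1; linarith [this]
  have hq : (0:ℝ) ≤ (4 + 2*Iab + 2*Iamb + 4*Ia + 4*Ib)/16 := by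
    have := certB 1 1 1 1; linarith [this]
  have hPst : ((2*Iamb - 2*Iab)/16)^2
      ≤ ((4 - 2*Iab - 2*Iamb + 4*Ib - 4*Ia)/16) * ((4 - 2*Iab - 2*Iamb + 4*Ia - 4*Ib)/16) := by
    have hquad : ∀ L : ℝ, 0 ≤ (4 - 2*Iab - 2*Iamb + 4*Ib - 4*Ia)*(L*L)
        + (2*(2*Iamb - 2*Iab))*L + (4 - 2*Iab - 2*Iamb + 4*Ia - 4*Ib) := by
      intro L
      have := certA (L+1) (-(L+1)) (L-1) (1-L)
      linarith [this]
    have hdz := discrim_le_zero hquad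
    rw [discrim] at hdz
    linarith [hdz]
  have hPQq : ((2*Iamb - 2*Iab)/16)^2
      ≤ ((4 + 2*Iamb + 2*Iab - 4*Ia - 4*Ib)/16) * ((4 + 2*Iab + 2*Iamb + 4*Ia + 4*Ib)/16) := by
    have hquad : ∀ L : ℝ, 0 ≤ (4 + 2*Iamb + 2*Iab - 4*Ia - 4*Ib)*(L*L)
        + (2*(2*Iamb - 2*Iab))*L + (4 + 2*Iab + 2*Iamb + 4*Ia + 4*Ib) := by
      intro L
      have := certB (L+1) (L+1) (1-L) (1-L)
      linarith [this]
    have hdz := discrim_le_zero hquad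
    rw [discrim] at hdz
    linarith [hdz]
  have hA : (0:ℝ) ≤ (4 + 2*Iamb + 2*Iab - 4*Ia - 4*Ib)/16 + (4 - 2*Iab - 2*Iamb + 4*Ib - 4*Ia)/16 := by
    linarith
  have hB : (0:ℝ) ≤ (4 + 2*Iamb + 2*Iab - 4*Ia - 4*Ib)/16 + (4 - 2*Iab - 2*Iamb + 4*Ia - 4*Ib)/16 := by
    linarith
  have main := scalar_key ((4 + 2*Iamb + 2*Iab - 4*Ia - 4*Ib)/16)
    ((4 - 2*Iab - 2*Iamb + 4*Ib - 4*Ia)/16)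
    ((4 - 2*Iab - 2*Iamb + 4*Ia - 4*Ib)/16)
    ((4 + 2*Iab + 2*Iamb + 4*Ia + 4*Ib)/16)
    ((2*Iamb - 2*Iab)/16)
    (Real.sqrt (((4 + 2*Iamb + 2*Iab - 4*Ia - 4*Ib)/16 + (4 - 2*Iab - 2*Iamb + 4*Ib - 4*Ia)/16)
      * ((4 + 2*Iamb + 2*Iab - 4*Ia - 4*Ib)/16 + (4 - 2*Iab - 2*Iamb + 4*Ia - 4*Ib)/16)))
    hQ hs ht hq (by ring) hPst hPQq (Real.sqrt_nonneg _)
    (Real.sq_sqrt (mul_nonneg hA hB))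
  -- final conversion
  rw [show Iab - Ia - Ib + 1
      = 4*((4 + 2*Iamb + 2*Iab - 4*Ia - 4*Ib)/16 - (2*Iamb - 2*Iab)/16) from by ring]
  rw [show (2 - 2*Ia : ℝ)
      = 2^2*((4 + 2*Iamb + 2*Iab - 4*Ia - 4*Ib)/16 + (4 - 2*Iab - 2*Iamb + 4*Ib - 4*Ia)/16) from by ring]
  rw [show (2 - 2*Ib : ℝ)
      = 2^2*((4 + 2*Iamb + 2*Iab - 4*Ia - 4*Ib)/16 + (4 - 2*Iab - 2*Iamb + 4*Ia - 4*Ib)/16) from by ring]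
  rw [Real.sqrt_mul (by norm_num : (0:ℝ) ≤ 2^2), Real.sqrt_mul (by norm_num : (0:ℝ) ≤ 2^2),
    Real.sqrt_sq (by norm_num : (0:ℝ) ≤ 2)]
  rw [show (1 : ℝ) - 1/64 * (2 - 2*Iab)
      = 1 - ((4 - 2*Iab - 2*Iamb + 4*Ib - 4*Ia)/16 + (4 - 2*Iab - 2*Iamb + 4*Ia - 4*Ib)/16
          + 2*((2*Iamb - 2*Iab)/16))/16 from by ring]
  rw [abs_mul, show |(4:ℝ)| = 4 from by norm_num]
  have e7 : 2 * Real.sqrt ((4 + 2*Iamb + 2*Iab - 4*Ia - 4*Ib)/16 + (4 - 2*Iab - 2*Iamb + 4*Ib - 4*Ia)/16)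
      * (2 * Real.sqrt ((4 + 2*Iamb + 2*Iab - 4*Ia - 4*Ib)/16 + (4 - 2*Iab - 2*Iamb + 4*Ia - 4*Ib)/16))
      * (1 - ((4 - 2*Iab - 2*Iamb + 4*Ib - 4*Ia)/16 + (4 - 2*Iab - 2*Iamb + 4*Ia - 4*Ib)/16
          + 2*((2*Iamb - 2*Iab)/16))/16)
      = 4*(Real.sqrt (((4 + 2*Iamb + 2*Iab - 4*Ia - 4*Ib)/16 + (4 - 2*Iab - 2*Iamb + 4*Ib - 4*Ia)/16)
          * ((4 + 2*Iamb + 2*Iab - 4*Ia - 4*Ib)/16 + (4 - 2*Iab - 2*Iamb + 4*Ia - 4*Ib)/16))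
        * (1 - ((4 - 2*Iab - 2*Iamb + 4*Ib - 4*Ia)/16 + (4 - 2*Iab - 2*Iamb + 4*Ia - 4*Ib)/16
          + 2*((2*Iamb - 2*Iab)/16))/16)) := by
    rw [Real.sqrt_mul hA]; ring
  rw [e7]
  linarith [main]
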